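/- Let T be a triangulated category with a semi-orthogonal decomposition ⟨A_1, …, A_m⟩ and suppose each A_i has a strong generator G_i with A_i = ⟨G_i⟩_{d_i} (generation computed inside A_i). Then G = G_1 ⊕ ⋯ ⊕ G_m is a strong generator of T with T = ⟨G⟩_{d_1 + ⋯ + d_m + (m−1)}. -/

import Mathlib

open CategoryTheory Limits Pretriangulated

set_option linter.unusedSectionVars false
set_option maxHeartbeats 1600000

universe v u

namespace OrlovSpec

variable (C : Type u) [Category.{v} C] [HasZeroObject C] [HasShift C ℤ]
  [Preadditive C] [∀ n : ℤ, (shiftFunctor C n).Additive] [Pretriangulated C]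
  [HasBinaryBiproducts C]

/-- `clos0 S` is the smallest class of objects containing `S` that is closed under
isomorphisms, shifts, finite coproducts and direct summands: this is `⟨S⟩₀`. -/
inductive clos0 (S : Set C) : Set C
  | of {X : C} (hX : X ∈ S) : clos0 S X
  | iso {X Y : C} (e : X ≅ Y) (hX : clos0 S X) : clos0 S Y
  | shift {X : C} (n : ℤ) (hX : clos0 S X) : clos0 S (X⟦n⟧)
  | biprod {X Y : C} (hX : clos0 S X) (hY : clos0 S Y) : clos0 S (X ⊞ Y)
  | summand {X Y : C} (r : X ⟶ Y) (s : Y ⟶ X) (hrs : r ≫ s = 𝟙 X) (hY : clos0 S Y) :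
      clos0 S X

/-- `star A B` consists of the extensions of objects of `B` by objects of `A`,
i.e. objects `X` fitting in a distinguished triangle `X₁ ⟶ X ⟶ X₂ ⟶ X₁[1]` with
`X₁ ∈ A` and `X₂ ∈ B`. -/
def star (A B : Set C) : Set C :=
  {X | ∃ (X₁ X₂ : C) (f : X₁ ⟶ X) (g : X ⟶ X₂) (h : X₂ ⟶ X₁⟦(1 : ℤ)⟧),
    Triangle.mk f g h ∈ (distTriang C) ∧ X₁ ∈ A ∧ X₂ ∈ B}

/-- The operation `A ⋄ B`: the closure under isomorphisms, shifts, finite coproducts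
and summands of the class of extensions of objects of `B` by objects of `A`. -/
def diamond (A B : Set C) : Set C := clos0 C (star C A B)

/-- `gen S n = ⟨S⟩ₙ`, the objects generated from `S` using at most `n` cones. -/
def gen (S : Set C) : ℕ → Set C
  | 0 => clos0 C S
  | (n + 1) => diamond C (gen S n) (clos0 C S)

variable {C}

/-- A morphism `f : X ⟶ Y` is `G`-ghost if the induced map
`Hom(G⟦j⟧, X) → Hom(G⟦j⟧, Y)` is zero for all `j : ℤ`. -/
def IsGhost (G : C) {X Y : C} (f : X ⟶ Y) : Prop :=
  ∀ (j : ℤ) (α : (G⟦j⟧ : C) ⟶ X), α ≫ f = 0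

/-- Composition of a chain of morphisms `X 0 ⟶ X 1 ⟶ ⋯ ⟶ X t`. -/
def chainComp (X : ℕ → C) (f : ∀ i, X i ⟶ X (i + 1)) : ∀ t, X 0 ⟶ X t
  | 0 => 𝟙 _
  | (t + 1) => chainComp X f t ≫ f t

section Aux

variable {S A B T : Set C}

/-- star membership from a distinguished triangle. -/
lemma mem_star (Tr : Triangle C) (hT : Tr ∈ distTriang C)
    (h1 : Tr.obj₁ ∈ A) (h3 : Tr.obj₃ ∈ B) : Tr.obj₂ ∈ star C A B :=
  ⟨Tr.obj₁, Tr.obj₃, Tr.mor₁, Tr.mor₂, Tr.mor₃, hT, h1, h3⟩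

lemma clos0_subset (h : S ⊆ clos0 C T) : clos0 C S ⊆ clos0 C T := by
  intro X hX
  induction hX with
  | of hX => exact h hX
  | iso e _ ih => exact clos0.iso e ih
  | shift n _ ih => exact clos0.shift n ih
  | biprod _ _ ih₁ ih₂ => exact clos0.biprod ih₁ ih₂
  | summand r s hrs _ ih => exact clos0.summand r s hrs ih

lemma isZero_mem_clos0 (hS : S.Nonempty) {X : C} (hX : IsZero X) : X ∈ clos0 C S := by
  obtain ⟨G, hG⟩ := hS
  exact clos0.summand (0 : X ⟶ G) 0 (by rw [comp_zero]; exact (hX.eq_of_src _ _).symm)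
    (clos0.of hG)

/-- `gen S n` is a `clos0`-closed class. -/
lemma gen_eq_clos0 (n : ℕ) : ∃ T : Set C, gen C S n = clos0 C T := by
  cases n with
  | zero => exact ⟨S, rfl⟩
  | succ n => exact ⟨star C (gen C S n) (clos0 C S), rfl⟩

lemma gen_iso {n : ℕ} {X Y : C} (e : X ≅ Y) (hX : X ∈ gen C S n) : Y ∈ gen C S n := by
  obtain ⟨T, hT⟩ := gen_eq_clos0 (S := S) n; rw [hT] at hX ⊢; exact clos0.iso e hX

lemma gen_shift {n : ℕ} {X : C} (k : ℤ) (hX : X ∈ gen C S n) : (X⟦k⟧ : C) ∈ gen C S n := by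
  obtain ⟨T, hT⟩ := gen_eq_clos0 (S := S) n; rw [hT] at hX ⊢; exact clos0.shift k hX

lemma gen_biprod {n : ℕ} {X Y : C} (hX : X ∈ gen C S n) (hY : Y ∈ gen C S n) :
    (X ⊞ Y) ∈ gen C S n := by
  obtain ⟨T, hT⟩ := gen_eq_clos0 (S := S) n; rw [hT] at hX hY ⊢; exact clos0.biprod hX hY

lemma gen_summand {n : ℕ} {X Y : C} (r : X ⟶ Y) (s : Y ⟶ X) (hrs : r ≫ s = 𝟙 X)
    (hY : Y ∈ gen C S n) : X ∈ gen C S n := by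
  obtain ⟨T, hT⟩ := gen_eq_clos0 (S := S) n; rw [hT] at hY ⊢; exact clos0.summand r s hrs hY

lemma clos0_subset_gen (hS : S.Nonempty) (n : ℕ) : clos0 C S ⊆ gen C S n := by
  induction n with
  | zero => exact subset_rfl
  | succ n ih =>
      intro Z hZ
      exact clos0.of (mem_star (contractibleTriangle Z) (contractible_distinguished Z)
        (ih hZ) (isZero_mem_clos0 hS (isZero_zero C)))

lemma gen_subset_succ (hS : S.Nonempty) (n : ℕ) : gen C S n ⊆ gen C S (n + 1) := by
  intro Z hZ
  exact clos0.of (mem_star (contractibleTriangle Z) (contractible_distinguished Z)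
    hZ (isZero_mem_clos0 hS (isZero_zero C)))

lemma gen_mono (hS : S.Nonempty) {n n' : ℕ} (h : n ≤ n') : gen C S n ⊆ gen C S n' := by
  induction h with
  | refl => exact subset_rfl
  | step h ih => exact ih.trans (gen_subset_succ hS _)

lemma gen_mono_set {S' : Set C} (h : S ⊆ clos0 C S') (n : ℕ) :
    gen C S n ⊆ gen C S' n := by
  induction n with
  | zero => exact clos0_subset h
  | succ n ih =>
      refine clos0_subset ?_
      rintro X ⟨X₁, X₂, f, g, hh, hT, h1, h2⟩
      exact clos0.of ⟨X₁, X₂, f, g, hh, hT, ih h1, clos0_subset h h2⟩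

end Aux

/-- binary biproduct is a product over `Fin 2`. -/
noncomputable def biprodIsoPi (Z : Fin 2 → C) :
    (Z 0 ⊞ Z 1) ≅ ∏ᶜ Z where
  hom := Pi.lift (fun j => Fin.cases biprod.fst
    (fun i => Fin.cases (motive := fun i : Fin 1 => (Z 0 ⊞ Z 1) ⟶ Z i.succ)
      biprod.snd (fun x => x.elim0) i) j)
  inv := biprod.lift (Pi.π Z 0) (Pi.π Z 1)
  hom_inv_id := by
    have h1 : (Fin.cases (motive := fun j : Fin 2 => (Z 0 ⊞ Z 1) ⟶ Z j) biprod.fst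
      (fun i => Fin.cases (motive := fun i : Fin 1 => (Z 0 ⊞ Z 1) ⟶ Z i.succ)
      biprod.snd (fun x => x.elim0) i) 1) = biprod.snd := rfl
    ext <;> simp [h1]
  inv_hom_id := by
    have h1 : (Fin.cases (motive := fun j : Fin 2 => (Z 0 ⊞ Z 1) ⟶ Z j) biprod.fst
      (fun i => Fin.cases (motive := fun i : Fin 1 => (Z 0 ⊞ Z 1) ⟶ Z i.succ)
      biprod.snd (fun x => x.elim0) i) 1) = biprod.snd := rfl
    ext j
    fin_cases j <;> simp [h1]

section Star

variable {S A B T : Set C}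

lemma star_iso {X Y : C} (e : X ≅ Y) (hX : X ∈ star C A B) : Y ∈ star C A B := by
  obtain ⟨X₁, X₂, f, g, hh, hT, h1, h2⟩ := hX
  refine ⟨X₁, X₂, f ≫ e.hom, e.inv ≫ g, hh, ?_, h1, h2⟩
  refine isomorphic_distinguished _ hT _ ?_
  exact Triangle.isoMk _ _ (Iso.refl _) e.symm (Iso.refl _) (by simp [Triangle.mk]) (by simp [Triangle.mk]) (by simp [Triangle.mk])

lemma star_shift (hA : ∀ X ∈ A, ∀ n : ℤ, (X⟦n⟧ : C) ∈ A)
    (hB : ∀ X ∈ B, ∀ n : ℤ, (X⟦n⟧ : C) ∈ B)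
    {X : C} (hX : X ∈ star C A B) (n : ℤ) : (X⟦n⟧ : C) ∈ star C A B := by
  obtain ⟨X₁, X₂, f, g, hh, hT, h1, h2⟩ := hX
  exact mem_star ((CategoryTheory.shiftFunctor (Triangle C) n).obj (Triangle.mk f g hh))
    (Pretriangulated.Triangle.shift_distinguished _ hT n) (hA _ h1 n) (hB _ h2 n)

lemma star_biprod (hA : ∀ X Y : C, X ∈ A → Y ∈ A → (X ⊞ Y) ∈ A)
    (hB : ∀ X Y : C, X ∈ B → Y ∈ B → (X ⊞ Y) ∈ B)
    {X Y : C} (hX : X ∈ star C A B) (hY : Y ∈ star C A B) : (X ⊞ Y) ∈ star C A B := by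
  obtain ⟨X₁, X₂, f, g, hh, hT, h1, h2⟩ := hX
  obtain ⟨Y₁, Y₂, f', g', hh', hT', h1', h2'⟩ := hY
  set Tt : Fin 2 → Triangle C := ![Triangle.mk f g hh, Triangle.mk f' g' hh'] with hTt
  have hdist : ∀ j, Tt j ∈ distTriang C := by
    intro j; fin_cases j
    · exact hT
    · exact hT'
  have hP := productTriangle_distinguished Tt hdist
  set P := productTriangle Tt with hPdef
  let e₁ : (X₁ ⊞ Y₁) ≅ P.obj₁ := biprodIsoPi (fun j => (Tt j).obj₁)
  let e₂ : (X ⊞ Y) ≅ P.obj₂ := biprodIsoPi (fun j => (Tt j).obj₂)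
  let e₃ : (X₂ ⊞ Y₂) ≅ P.obj₃ := biprodIsoPi (fun j => (Tt j).obj₃)
  have hT2 : Triangle.mk (e₁.hom ≫ P.mor₁ ≫ e₂.inv) (e₂.hom ≫ P.mor₂ ≫ e₃.inv)
      (e₃.hom ≫ P.mor₃ ≫ ((shiftFunctor C (1:ℤ)).mapIso e₁).inv) ∈ distTriang C := by
    refine isomorphic_distinguished _ hP _ ?_
    exact Triangle.isoMk _ _ e₁ e₂ e₃ (by simp [Triangle.mk]) (by simp [Triangle.mk]) (by simp [Triangle.mk])
  exact mem_star _ hT2 (hA _ _ h1 h1') (hB _ _ h2 h2')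

/-- Elements of `clos0 T` are retracts of elements of `T`, provided `T` is closed
under isomorphisms, shifts and biproducts. -/
lemma clos0_subset_smd
    (hiso : ∀ X Y : C, X ∈ T → (X ≅ Y) → Y ∈ T)
    (hshift : ∀ X ∈ T, ∀ n : ℤ, (X⟦n⟧ : C) ∈ T)
    (hbiprod : ∀ X Y : C, X ∈ T → Y ∈ T → (X ⊞ Y) ∈ T)
    {X : C} (hX : X ∈ clos0 C T) :
    ∃ Y ∈ T, ∃ (a : X ⟶ Y) (b : Y ⟶ X), a ≫ b = 𝟙 X := by
  induction hX with
  | of hX => exact ⟨_, hX, 𝟙 _, 𝟙 _, by simp⟩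
  | iso e _ ih =>
      obtain ⟨Z, hZ, a, b, hab⟩ := ih
      exact ⟨Z, hZ, e.inv ≫ a, b ≫ e.hom, by
        rw [Category.assoc, ← Category.assoc a, hab, Category.id_comp, Iso.inv_hom_id]⟩
  | shift n _ ih =>
      obtain ⟨Z, hZ, a, b, hab⟩ := ih
      exact ⟨Z⟦n⟧, hshift _ hZ n, a⟦n⟧', b⟦n⟧', by
        rw [← Functor.map_comp, hab, CategoryTheory.Functor.map_id]⟩
  | biprod _ _ ih₁ ih₂ =>
      obtain ⟨Z, hZ, a, b, hab⟩ := ih₁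
      obtain ⟨Z', hZ', a', b', hab'⟩ := ih₂
      exact ⟨Z ⊞ Z', hbiprod _ _ hZ hZ', biprod.map a a', biprod.map b b', by
        ext <;> simp [hab, hab']⟩
  | summand r s hrs _ ih =>
      obtain ⟨Z, hZ, a, b, hab⟩ := ih
      exact ⟨Z, hZ, r ≫ a, b ≫ s, by
        rw [Category.assoc, ← Category.assoc a, hab, Category.id_comp, hrs]⟩

end Star

section Key

variable {S : Set C}

/-- If `X₂` is a retract of `E`, then any extension `X` of `X₂` by `X₁` is a retract of
an extension `W` of `E` by `X₁`. -/
lemma retract_triangle {X₁ X X₂ E : C} (f : X₁ ⟶ X) (g : X ⟶ X₂) (h : X₂ ⟶ X₁⟦(1:ℤ)⟧)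
    (hT : Triangle.mk f g h ∈ distTriang C)
    (r : X₂ ⟶ E) (s : E ⟶ X₂) (hrs : r ≫ s = 𝟙 X₂) :
    ∃ (W : C) (f' : X₁ ⟶ W) (g' : W ⟶ E),
      (Triangle.mk f' g' (s ≫ h) ∈ distTriang C) ∧
      ∃ (a : X ⟶ W) (b : W ⟶ X), a ≫ b = 𝟙 X := by
  obtain ⟨W, f', g', hTW⟩ := distinguished_cocone_triangle₂ (s ≫ h)
  refine ⟨W, f', g', hTW, ?_⟩
  obtain ⟨φ, hφ₁, hφ₂⟩ : ∃ φ : X ⟶ W, f ≫ φ = 𝟙 X₁ ≫ f' ∧ g ≫ r = φ ≫ g' :=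
    complete_distinguished_triangle_morphism₂ _ _ hT hTW
      (𝟙 X₁) r (by dsimp only [Triangle.mk]; rw [CategoryTheory.Functor.map_id, Category.comp_id,
        ← Category.assoc, hrs, Category.id_comp])
  obtain ⟨ψ, hψ₁, hψ₂⟩ : ∃ ψ : W ⟶ X, f' ≫ ψ = 𝟙 X₁ ≫ f ∧ g' ≫ s = ψ ≫ g :=
    complete_distinguished_triangle_morphism₂ _ _ hTW hT
      (𝟙 X₁) s (by dsimp only [Triangle.mk]; rw [CategoryTheory.Functor.map_id, Category.comp_id])
  rw [Category.id_comp] at hφ₁ hψ₁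
  have hΦ : IsIso (φ ≫ ψ) := by
    exact isIso₂_of_isIso₁₃ (T := Triangle.mk f g h) (T' := Triangle.mk f g h)
      { hom₁ := 𝟙 X₁
        hom₂ := φ ≫ ψ
        hom₃ := 𝟙 X₂
        comm₁ := by
          dsimp only [Triangle.mk]
          rw [Category.id_comp, ← Category.assoc, hφ₁, hψ₁]
        comm₂ := by
          dsimp only [Triangle.mk]
          rw [Category.comp_id, Category.assoc, ← hψ₂, ← Category.assoc, ← hφ₂,
            Category.assoc, hrs, Category.comp_id]
        comm₃ := by
          dsimp only [Triangle.mk]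
          rw [CategoryTheory.Functor.map_id, Category.comp_id, Category.id_comp] }
      hT hT (by dsimp only [Triangle.mk]; infer_instance) (by dsimp only [Triangle.mk]; infer_instance)
  exact ⟨φ, ψ ≫ inv (φ ≫ ψ), by rw [← Category.assoc, IsIso.hom_inv_id]⟩

/-- The key octahedron-substitute. -/
lemma key_ext {N W E Y₁ Y₀ : C} (f : N ⟶ W) (u : W ⟶ E) (h : E ⟶ N⟦(1:ℤ)⟧)
    (hT1 : Triangle.mk f u h ∈ distTriang C)
    (p : Y₁ ⟶ E) (q : E ⟶ Y₀) (r : Y₀ ⟶ Y₁⟦(1:ℤ)⟧)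
    (hT2 : Triangle.mk p q r ∈ distTriang C) :
    ∃ (M : C) (f₂ : N ⟶ M) (w₂ : M ⟶ Y₁),
      (Triangle.mk f₂ w₂ (p ≫ h) ∈ distTriang C) ∧
      ∃ (F : C) (i : F ⟶ W) (δ : Y₀ ⟶ F⟦(1:ℤ)⟧),
        (Triangle.mk i (u ≫ q) δ ∈ distTriang C) ∧
        ∃ (a : F ⟶ (M ⊞ (Y₀⟦(-1:ℤ)⟧))) (b : (M ⊞ (Y₀⟦(-1:ℤ)⟧)) ⟶ F), a ≫ b = 𝟙 F := by
  have hpq : p ≫ q = 0 := comp_distTriang_mor_zero₁₂ _ hT2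
  have huh : u ≫ h = 0 := comp_distTriang_mor_zero₂₃ _ hT1
  obtain ⟨M, f₂, w₂, hTM⟩ := distinguished_cocone_triangle₂ (p ≫ h)
  refine ⟨M, f₂, w₂, hTM, ?_⟩
  obtain ⟨j, hj₁, hj₂⟩ : ∃ j : M ⟶ W, f₂ ≫ j = 𝟙 N ≫ f ∧ w₂ ≫ p = j ≫ u :=
    complete_distinguished_triangle_morphism₂ _ _ hTM hT1
      (𝟙 N) p (by dsimp only [Triangle.mk]; rw [CategoryTheory.Functor.map_id, Category.comp_id])
  rw [Category.id_comp] at hj₁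
  obtain ⟨F, i, δ, hTF⟩ := distinguished_cocone_triangle₁ (u ≫ q)
  have hiuq : i ≫ (u ≫ q) = 0 := comp_distTriang_mor_zero₁₂ _ hTF
  refine ⟨F, i, δ, hTF, ?_⟩
  obtain ⟨χ, hχ⟩ : ∃ χ : M ⟶ F, j = χ ≫ i :=
    Triangle.coyoneda_exact₂ _ hTF j (by
      show j ≫ (u ≫ q) = 0
      rw [← Category.assoc, ← hj₂, Category.assoc, hpq, Limits.comp_zero])
  obtain ⟨yh, hyh⟩ : ∃ yh : F ⟶ Y₁, i ≫ u = yh ≫ p :=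
    Triangle.coyoneda_exact₂ _ hT2 (i ≫ u) (by
      show (i ≫ u) ≫ q = 0
      rw [Category.assoc]; exact hiuq)
  obtain ⟨σ₀, hσ₀⟩ : ∃ σ₀ : F ⟶ M, yh = σ₀ ≫ w₂ :=
    Triangle.coyoneda_exact₃ _ hTM yh (by
      show yh ≫ (p ≫ h) = 0
      rw [← Category.assoc, ← hyh, Category.assoc, huh, Limits.comp_zero])
  obtain ⟨θ, hθ⟩ : ∃ θ : F ⟶ N, σ₀ ≫ j - i = θ ≫ f :=
    Triangle.coyoneda_exact₂ _ hT1 (σ₀ ≫ j - i) (by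
      show (σ₀ ≫ j - i) ≫ u = 0
      rw [Preadditive.sub_comp, Category.assoc, ← hj₂, ← Category.assoc, ← hσ₀, ← hyh,
        sub_self])
  set σ : F ⟶ M := σ₀ - θ ≫ f₂ with hσdef
  have hσi : σ ≫ j = i := by
    have h' : σ₀ ≫ j = i + θ ≫ f := by
      rw [← sub_eq_iff_eq_add']
      exact hθ
    rw [hσdef, Preadditive.sub_comp, Category.assoc, hj₁, h']
    abel
  have hfact : (σ ≫ χ - 𝟙 F) ≫ i = 0 := by
    rw [Preadditive.sub_comp, Category.assoc, ← hχ, hσi, Category.id_comp, sub_self]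
  obtain ⟨z, hz⟩ : ∃ z : F ⟶ (Y₀⟦(-1:ℤ)⟧),
      σ ≫ χ - 𝟙 F = z ≫ (Triangle.mk i (u ≫ q) δ).invRotate.mor₁ :=
    Triangle.coyoneda_exact₂ _ (inv_rot_of_distTriang _ hTF) (σ ≫ χ - 𝟙 F) hfact
  let μ : (Y₀⟦(-1:ℤ)⟧ : C) ⟶ F := (Triangle.mk i (u ≫ q) δ).invRotate.mor₁
  have hz' : σ ≫ χ - 𝟙 F = z ≫ μ := hz
  have hσχ : σ ≫ χ = 𝟙 F + z ≫ μ := by rw [← hz']; abel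
  refine ⟨biprod.lift σ (-z), biprod.desc χ μ, ?_⟩
  rw [biprod.lift_desc, Preadditive.neg_comp, hσχ]
  abel

end Key

section GenExt

variable {S : Set C}

/-- The main composition lemma: an extension of an object of `⟨S⟩_b` by an object of
`⟨S⟩_a` lies in `⟨S⟩_{a+b+1}`. -/
lemma gen_ext (hS : S.Nonempty) :
    ∀ (b : ℕ) {a : ℕ} {X₁ X X₂ : C} (f : X₁ ⟶ X) (g : X ⟶ X₂) (h : X₂ ⟶ X₁⟦(1:ℤ)⟧),
      (Triangle.mk f g h ∈ distTriang C) → X₁ ∈ gen C S a → X₂ ∈ gen C S b →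
      X ∈ gen C S (a + b + 1) := by
  intro b
  induction b with
  | zero =>
      intro a X₁ X X₂ f g h hT h1 h2
      exact clos0.of ⟨X₁, X₂, f, g, h, hT, h1, h2⟩
  | succ b ih =>
      intro a X₁ X X₂ f g h hT h1 h2
      have h2' : X₂ ∈ clos0 C (star C (gen C S b) (clos0 C S)) := h2
      obtain ⟨E, hE, r, s, hrs⟩ := clos0_subset_smd
        (fun Z Z' hZ e => star_iso e hZ)
        (fun Z hZ n => star_shift (fun _ hx n => gen_shift n hx)
          (fun _ hx n => clos0.shift n hx) hZ n)
        (fun Z Z' hZ hZ' => star_biprod (fun _ _ hx hy => gen_biprod hx hy)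
          (fun _ _ hx hy => clos0.biprod hx hy) hZ hZ')
        h2'
      obtain ⟨W, f', g', hTW, aX, bX, hab⟩ := retract_triangle f g h hT r s hrs
      obtain ⟨Y₁, Y₀, p, q, rr, hT2, hY₁, hY₀⟩ := hE
      obtain ⟨M, f₂, w₂, hTM, F, i, δ, hTF, aF, bF, habF⟩ :=
        key_ext f' g' (s ≫ h) hTW p q rr hT2
      have hM : M ∈ gen C S (a + b + 1) := ih f₂ w₂ (p ≫ (s ≫ h)) hTM h1 hY₁
      have hF : F ∈ gen C S (a + b + 1) :=
        gen_summand aF bF habF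
          (gen_biprod hM (gen_shift (-1) (clos0_subset_gen hS _ hY₀)))
      have hW : W ∈ gen C S (a + (b+1) + 1) :=
        clos0.of (mem_star (Triangle.mk i (g' ≫ q) δ) hTF hF hY₀)
      exact gen_summand aX bX hab hW

/-- Distinguished triangle with zero first object: second map is an iso. -/
lemma iso_of_isZero₁ {Z X X₂ : C} (f : Z ⟶ X) (g : X ⟶ X₂) (h : X₂ ⟶ Z⟦(1:ℤ)⟧)
    (hT : Triangle.mk f g h ∈ distTriang C) (hZ : IsZero Z) : IsIso g :=
  (Triangle.isZero₁_iff_isIso₂ _ hT).1 hZ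

end GenExt

/-- If `⟨A 0, …, A (m-1)⟩` is a semi-orthogonal decomposition of `T` and each component
`A i` has a strong generator `G i` with `A i ⊆ ⟨G i⟩_{d i}`, then
`G = G 0 ⊕ ⋯ ⊕ G (m-1)` is a strong generator of `T` with
`T = ⟨G⟩_{d 0 + ⋯ + d (m-1) + (m-1)}`. -/
theorem gen_of_semiorthogonal [HasFiniteBiproducts C]
    (m : ℕ) (hm : 1 ≤ m) (A : Fin m → Set C)
    (hshift : ∀ i : Fin m, ∀ X ∈ A i, ∀ n : ℤ, (X⟦n⟧ : C) ∈ A i)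
    (hsemiorth : ∀ i j : Fin m, i < j → ∀ X ∈ A j, ∀ Y ∈ A i, ∀ f : X ⟶ Y, f = 0)
    (hfilt : ∀ X : C, ∃ Ts : ℕ → C, Ts 0 = X ∧ IsZero (Ts m) ∧
      ∀ kk : Fin m, ∃ (Ak : C) (_ : Ak ∈ A kk)
        (f : Ts ((kk : ℕ) + 1) ⟶ Ts (kk : ℕ)) (g : Ts (kk : ℕ) ⟶ Ak)
        (h : Ak ⟶ ((Ts ((kk : ℕ) + 1))⟦(1 : ℤ)⟧ : C)),
        Triangle.mk f g h ∈ (distTriang C))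
    (G : Fin m → C) (hG : ∀ i, G i ∈ A i)
    (d : Fin m → ℕ) (hgen : ∀ i : Fin m, ∀ X ∈ A i, X ∈ gen C ({G i} : Set C) (d i)) :
    ∀ X : C, X ∈ gen C ({⨁ G} : Set C) (∑ i, d i + (m - 1)) := by
  intro X
  classical
  have hS : ({⨁ G} : Set C).Nonempty := ⟨⨁ G, rfl⟩
  have htrans : ∀ i : Fin m, ∀ {n : ℕ},
      gen C ({G i} : Set C) n ⊆ gen C ({⨁ G} : Set C) n := by
    intro i n
    refine gen_mono_set ?_ _
    rintro Z rfl
    exact clos0.summand (biproduct.ι G i) (biproduct.π G i) (by simp) (clos0.of rfl)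
  obtain ⟨Ts, hTs0, hTsm, htri⟩ := hfilt X
  set d' : ℕ → ℕ := fun n => if h : n < m then d ⟨n, h⟩ else 0 with hd'
  set Ebud : ℕ → ℕ := fun j => (∑ t ∈ Finset.range (j+1), d' (m - 1 - t)) + j with hEbud
  have hd'eq : ∀ (k : ℕ) (hk : k < m), d' k = d ⟨k, hk⟩ := by
    intro k hk; simp only [hd', dif_pos hk]
  have key : ∀ j, j < m → Ts (m - 1 - j) ∈ gen C ({⨁ G} : Set C) (Ebud j) := by
    intro j
    induction j with
    | zero =>
        intro hj
        obtain ⟨Ak, hAk, f, g, h, hT⟩ := htri ⟨m-1, by omega⟩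
        have hzero : IsZero (Ts ((m-1 : ℕ) + 1)) := by
          have he : (m - 1 : ℕ) + 1 = m := by omega
          rw [he]; exact hTsm
        have hiso : IsIso g := iso_of_isZero₁ f g h hT hzero
        have hmem : Ak ∈ gen C ({⨁ G} : Set C) (d ⟨m-1, by omega⟩) :=
          htrans _ (hgen _ _ hAk)
        have hmem2 : Ts (m-1) ∈ gen C ({⨁ G} : Set C) (d ⟨m-1, by omega⟩) :=
          gen_iso (asIso g).symm hmem
        have hE0 : Ebud 0 = d ⟨m-1, by omega⟩ := by
          simp only [hEbud, Finset.sum_range_one, Nat.sub_zero, Nat.add_zero]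
          exact hd'eq _ (by omega)
        rw [hE0]
        exact hmem2
    | succ j ih =>
        intro hj
        have hjm : j < m := by omega
        obtain ⟨Ak, hAk, f, g, h, hT⟩ := htri ⟨m - 1 - (j+1), by omega⟩
        have hk1 : (m - 1 - (j+1) : ℕ) + 1 = m - 1 - j := by omega
        have h1 : Ts ((m - 1 - (j+1) : ℕ) + 1) ∈ gen C ({⨁ G} : Set C) (Ebud j) := by
          rw [hk1]; exact ih hjm
        have h2 : Ak ∈ gen C ({⨁ G} : Set C) (d ⟨m - 1 - (j+1), by omega⟩) :=
          htrans _ (hgen _ _ hAk)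
        have h3 := gen_ext hS _ f g h hT h1 h2
        have hEs : Ebud (j+1) = Ebud j + d ⟨m - 1 - (j+1), by omega⟩ + 1 := by
          simp only [hEbud, Finset.sum_range_succ]
          rw [hd'eq (m - 1 - (j+1)) (by omega)]
          omega
        rw [hEs]
        exact h3
  have hfin := key (m-1) (by omega)
  have hz : (m - 1 - (m - 1) : ℕ) = 0 := by omega
  rw [hz, hTs0] at hfin
  have hEfin : Ebud (m-1) = ∑ i, d i + (m - 1) := by
    have h1 : (m - 1) + 1 = m := by omega
    have h2 : ∑ t ∈ Finset.range m, d' (m - 1 - t) = ∑ t ∈ Finset.range m, d' t :=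
      Finset.sum_range_reflect d' m
    have h3 : ∑ i : Fin m, d i = ∑ t ∈ Finset.range m, d' t := by
      rw [← Fin.sum_univ_eq_sum_range d' m]
      refine Finset.sum_congr rfl (fun i _ => ?_)
      rw [hd'eq _ i.isLt]
    simp only [hEbud, h1, h2, ← h3]
  rw [hEfin] at hfin
  exact hfin

end OrlovSpec
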